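/- Let μ be a Borel probability measure on ℝ × ℝ, let μ₁ denote its first marginal, and let ν denote the disintegration kernel of μ over μ₁ (so μ = μ₁ ⊗ₘ ν). Assume that ν(x) is atomless for μ₁-a.e. x. Define F : ℝ × ℝ → ℝ by F(x, y) = ν(x)((−∞, y]) and Φ(x, y) = (x, F(x, y)). Then Φ is Borel measurable, the pushforward of μ under Φ equals the product measure μ₁ × Leb_{[0,1]}, and there exists a Borel measurable map Ψ : ℝ × ℝ → ℝ × ℝ of the form Ψ(x, y) = (x, G(x, y)) such that Ψ ∘ Φ = id μ-a.e. and Φ ∘ Ψ = id (μ₁ × Leb_{[0,1]})-a.e. -/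

import Mathlib

set_option linter.unusedSectionVars false
set_option maxHeartbeats 1000000

open MeasureTheory ProbabilityTheory Set Filter Topology

namespace PITAux

/-- The CDF of `m` as a plain function. -/
noncomputable def cf (m : Measure ℝ) (y : ℝ) : ℝ := (m (Set.Iic y)).toReal

variable {m : Measure ℝ} [IsProbabilityMeasure m]

lemma cf_eq_cdf : cf m = ⇑(cdf m) := by
  funext y; rw [cf, cdf_eq_real]; rfl

lemma cf_mono : Monotone (cf m) := by rw [cf_eq_cdf]; exact monotone_cdf m

lemma ofReal_cf (y : ℝ) : ENNReal.ofReal (cf m y) = m (Iic y) := by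
  rw [cf_eq_cdf]; exact ofReal_cdf m y

lemma cf_nonneg (y : ℝ) : 0 ≤ cf m y := ENNReal.toReal_nonneg

lemma cf_le_one (y : ℝ) : cf m y ≤ 1 := by rw [cf_eq_cdf]; exact cdf_le_one m y

lemma cf_tendsto_atBot : Tendsto (cf m) atBot (𝓝 0) := by
  rw [cf_eq_cdf]; exact tendsto_cdf_atBot m

lemma cf_tendsto_atTop : Tendsto (cf m) atTop (𝓝 1) := by
  rw [cf_eq_cdf]; exact tendsto_cdf_atTop m

lemma exists_cf_gt {u : ℝ} (hu : u < 1) : ∃ y, u < cf m y :=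
  (cf_tendsto_atTop.eventually (eventually_gt_nhds hu)).exists

lemma exists_cf_lt {u : ℝ} (hu : 0 < u) : ∃ y, cf m y < u :=
  (cf_tendsto_atBot.eventually (eventually_lt_nhds hu)).exists

variable (hm : ∀ y : ℝ, m {y} = 0)
include hm

lemma cf_continuous : Continuous (cf m) := by
  rw [cf_eq_cdf, continuous_iff_continuousAt]
  intro x
  rw [(cdf m).mono.continuousAt_iff_leftLim_eq_rightLim, (cdf m).rightLim_eq]
  have h := (cdf m).measure_singleton x
  rw [measure_cdf, hm x, eq_comm, ENNReal.ofReal_eq_zero] at h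
  have h3 : Function.leftLim (⇑(cdf m)) x ≤ cdf m x := (cdf m).mono.leftLim_le le_rfl
  linarith

lemma measure_cf_le {u : ℝ} (h0 : 0 < u) (h1 : u < 1) :
    m {y | cf m y ≤ u} = ENNReal.ofReal u := by
  obtain ⟨a, ha⟩ := exists_cf_lt (m := m) h0
  obtain ⟨b, hb⟩ := exists_cf_gt (m := m) h1
  set T := {y | cf m y ≤ u} with hT
  have hT_closed : IsClosed T := isClosed_le (cf_continuous hm) continuous_const
  have hne : T.Nonempty := ⟨a, ha.le⟩
  have hbdd : BddAbove T := by
    refine ⟨b, fun y hy => ?_⟩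
    by_contra hyb
    push_neg at hyb
    exact absurd (cf_mono hyb.le) (not_le.2 (lt_of_le_of_lt hy hb))
  have hc : sSup T ∈ T := hT_closed.csSup_mem hne hbdd
  have hTc : T = Iic (sSup T) := by
    refine subset_antisymm (fun y hy => le_csSup hbdd hy) (fun y hy => le_trans (cf_mono hy) hc)
  have hfc : cf m (sSup T) = u := by
    refine le_antisymm hc ?_
    by_contra h
    push_neg at h
    have hev : ∀ᶠ y in 𝓝[>] (sSup T), cf m y < u :=
      ((cf_continuous hm).continuousAt.eventually_lt continuousAt_const h).filter_mono
        nhdsWithin_le_nhds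
    obtain ⟨y, hy, hy2⟩ := (hev.and eventually_mem_nhdsWithin).exists
    exact absurd (le_csSup hbdd hy.le) (not_le.2 hy2)
  rw [← hfc, ofReal_cf]
  exact congrArg m hTc


lemma measure_cf_le_zero : m {y | cf m y ≤ 0} = 0 := by
  have h : ∀ n : ℕ, m {y | cf m y ≤ 0} ≤ ENNReal.ofReal (1 / (n + 2 : ℝ)) := by
    intro n
    have h2 : (0:ℝ) < 1 / (n + 2 : ℝ) := by positivity
    have h3 : (1 : ℝ) / (n + 2 : ℝ) < 1 := by
      rw [div_lt_one (by positivity)]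
      have : (0:ℝ) ≤ (n:ℝ) := Nat.cast_nonneg n
      linarith
    rw [← measure_cf_le hm h2 h3]
    exact measure_mono (fun y hy => le_trans hy h2.le)
  have h4 : Tendsto (fun n : ℕ => (n : ℝ) + 2) atTop atTop :=
    tendsto_atTop_add_const_right _ 2 tendsto_natCast_atTop_atTop
  have h5 : Tendsto (fun n : ℕ => ((n : ℝ) + 2)⁻¹) atTop (𝓝 0) := h4.inv_tendsto_atTop
  have htend : Tendsto (fun n : ℕ => ENNReal.ofReal (1 / (n + 2 : ℝ))) atTop (𝓝 0) := by
    rw [← ENNReal.ofReal_zero]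
    refine (ENNReal.continuous_ofReal.tendsto 0).comp ?_
    simpa [one_div] using h5
  exact le_antisymm (ge_of_tendsto' htend (fun n => h n)) (by simp)

/-- Probability integral transform for an atomless measure on `ℝ`. -/
lemma map_cf : Measure.map (cf m) m = volume.restrict (Icc (0:ℝ) 1) := by
  have hmeas : Measurable (cf m) := cf_mono.measurable
  refine Measure.ext_of_Iic _ _ (fun u => ?_)
  rw [Measure.map_apply hmeas measurableSet_Iic, Measure.restrict_apply measurableSet_Iic]
  rcases lt_or_ge u 0 with h | h
  · have h1 : cf m ⁻¹' Iic u = ∅ := by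
      ext y; simp only [mem_preimage, mem_Iic, mem_empty_iff_false, iff_false, not_le]
      exact lt_of_lt_of_le h (cf_nonneg y)
    have h2 : Iic u ∩ Icc (0:ℝ) 1 = ∅ := by
      ext y; simp only [mem_inter_iff, mem_Iic, mem_Icc, mem_empty_iff_false, iff_false]
      rintro ⟨h3, h4, -⟩; linarith
    rw [h1, h2]
    simp
  rcases lt_or_ge u 1 with h1 | h1
  · have h2 : Iic u ∩ Icc (0:ℝ) 1 = Icc 0 u := by
      ext y; simp only [mem_inter_iff, mem_Iic, mem_Icc]
      constructor
      · rintro ⟨h3, h4, -⟩; exact ⟨h4, h3⟩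
      · rintro ⟨h3, h4⟩; exact ⟨h4, h3, by linarith⟩
    rw [h2, Real.volume_Icc]
    rcases eq_or_lt_of_le h with h0 | h0
    · rw [← h0]
      simpa using (show m (cf m ⁻¹' Iic 0) = 0 from measure_cf_le_zero hm)
    · rw [show cf m ⁻¹' Iic u = {y | cf m y ≤ u} from rfl, measure_cf_le hm h0 h1, sub_zero]
  · have h2 : cf m ⁻¹' Iic u = univ := by
      ext y; simp only [mem_preimage, mem_Iic, mem_univ, iff_true]
      exact le_trans (cf_le_one y) h1
    have h3 : Iic u ∩ Icc (0:ℝ) 1 = Icc 0 1 := by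
      refine inter_eq_self_of_subset_right (fun y hy => ?_)
      exact le_trans hy.2 h1
    rw [h2, h3, Real.volume_Icc, measure_univ]
    simp

lemma measure_flat (q : ℝ) : m {y | q < y ∧ cf m y ≤ cf m q} = 0 := by
  rcases lt_or_ge (cf m q) 1 with h | h
  · have hsub : {y | q < y ∧ cf m y ≤ cf m q} ⊆ {y | cf m y ≤ cf m q} \ Iic q := by
      intro y hy
      exact ⟨hy.2, not_le.2 hy.1⟩
    refine measure_mono_null hsub ?_
    rcases lt_or_ge 0 (cf m q) with h0 | h0
    · have hIic : Iic q ⊆ {y | cf m y ≤ cf m q} := fun y hy => cf_mono hy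
      rw [measure_diff hIic measurableSet_Iic.nullMeasurableSet (measure_ne_top m _),
        measure_cf_le hm h0 h, ofReal_cf]
      simp
    · have hq0 : cf m q = 0 := le_antisymm h0 (cf_nonneg q)
      refine measure_mono_null diff_subset ?_
      have : {y | cf m y ≤ cf m q} = {y | cf m y ≤ 0} := by rw [hq0]
      rw [this]
      exact measure_cf_le_zero hm
  · have hq1 : cf m q = 1 := le_antisymm (cf_le_one q) h
    refine measure_mono_null (fun y hy => not_le.2 hy.1) ?_
    have : m (Ioi q) = 0 := by
      rw [← compl_Iic, measure_compl measurableSet_Iic (measure_ne_top m _), measure_univ,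
        ← ofReal_cf, hq1]
      simp
    exact measure_mono_null (fun y hy => not_le.1 hy) this

lemma ae_left_inv : ∀ᵐ y ∂m, sInf {z | cf m y ≤ cf m z} = y := by
  have hnull : m ({y | cf m y ≤ 0} ∪ ⋃ q : ℚ, {y | (q:ℝ) < y ∧ cf m y ≤ cf m (q:ℝ)}) = 0 := by
    refine measure_union_null (measure_cf_le_zero hm) ?_
    exact measure_iUnion_null (fun q => measure_flat hm (q:ℝ))
  rw [← compl_mem_ae_iff] at hnull
  filter_upwards [hnull] with y hy
  simp only [compl_union, mem_inter_iff, mem_compl_iff, mem_setOf_eq, mem_iUnion, not_exists,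
    not_and, not_le] at hy
  obtain ⟨hy0, hyq⟩ := hy
  set S := {z | cf m y ≤ cf m z} with hS
  have hyS : y ∈ S := by simp only [hS, mem_setOf_eq]; exact le_rfl
  obtain ⟨a, ha⟩ := exists_cf_lt (m := m) hy0
  have hbdd : BddBelow S := by
    refine ⟨a, fun z hz => ?_⟩
    by_contra hza
    push_neg at hza
    exact absurd (le_trans hz (cf_mono hza.le)) (not_le.2 ha)
  refine le_antisymm (csInf_le hbdd hyS) ?_
  by_contra h
  push_neg at h
  have hmem : sInf S ∈ S := (isClosed_le continuous_const (cf_continuous hm)).csInf_mem ⟨y, hyS⟩ hbdd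
  obtain ⟨q, hq1, hq2⟩ := exists_rat_btwn h
  exact absurd (le_trans hmem (cf_mono hq1.le)) (not_le.2 (hyq q hq2))

lemma right_inv {u : ℝ} (h0 : 0 < u) (h1 : u < 1) :
    cf m (sInf {z | u ≤ cf m z}) = u := by
  obtain ⟨a, ha⟩ := exists_cf_lt (m := m) h0
  obtain ⟨b, hb⟩ := exists_cf_gt (m := m) h1
  set S := {z | u ≤ cf m z} with hS
  have hne : S.Nonempty := ⟨b, hb.le⟩
  have hbdd : BddBelow S := by
    refine ⟨a, fun z hz => ?_⟩
    by_contra hza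
    push_neg at hza
    exact absurd (le_trans hz (cf_mono hza.le)) (not_le.2 ha)
  have hmem : sInf S ∈ S := (isClosed_le continuous_const (cf_continuous hm)).csInf_mem hne hbdd
  refine le_antisymm ?_ hmem
  have htend : Tendsto (cf m) (𝓝[<] (sInf S)) (𝓝 (cf m (sInf S))) :=
    ((cf_continuous hm).continuousAt).mono_left nhdsWithin_le_nhds
  refine le_of_tendsto htend ?_
  filter_upwards [eventually_mem_nhdsWithin] with z hz
  by_contra hzu
  push_neg at hzu
  exact absurd (csInf_le hbdd hzu.le) (not_le.2 hz)

end PITAux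

open PITAux

theorem fiberwise_cdf_pushforward
    (μ : Measure (ℝ × ℝ)) [IsProbabilityMeasure μ]
    (hatomless : ∀ᵐ x ∂μ.fst, ∀ y : ℝ, μ.condKernel x {y} = 0) :
    Measurable (fun p : ℝ × ℝ => ((p.1, (μ.condKernel p.1 (Set.Iic p.2)).toReal) : ℝ × ℝ)) ∧
    Measure.map (fun p : ℝ × ℝ => ((p.1, (μ.condKernel p.1 (Set.Iic p.2)).toReal) : ℝ × ℝ)) μ
      = μ.fst.prod (volume.restrict (Set.Icc (0:ℝ) 1)) ∧
    ∃ G : ℝ × ℝ → ℝ,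
      Measurable (fun p : ℝ × ℝ => ((p.1, G p) : ℝ × ℝ)) ∧
      (∀ᵐ p ∂μ,
        (((p.1, (μ.condKernel p.1 (Set.Iic p.2)).toReal) : ℝ × ℝ).1,
          G ((p.1, (μ.condKernel p.1 (Set.Iic p.2)).toReal) : ℝ × ℝ)) = p) ∧
      (∀ᵐ p ∂(μ.fst.prod (volume.restrict (Set.Icc (0:ℝ) 1))),
        ((((p.1, G p) : ℝ × ℝ).1,
          (μ.condKernel ((p.1, G p) : ℝ × ℝ).1 (Set.Iic (((p.1, G p) : ℝ × ℝ).2))).toReal)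
            : ℝ × ℝ) = p) := by
  classical
  have hcf : ∀ (x y : ℝ), cf (μ.condKernel x) y = (μ.condKernel x (Set.Iic y)).toReal :=
    fun x y => rfl
  -- joint measurability
  have hFmeas : Measurable (fun p : ℝ × ℝ => μ.condKernel p.1 (Set.Iic p.2)) := by
    have ht : MeasurableSet {q : (ℝ × ℝ) × ℝ | q.2 ≤ q.1.2} :=
      measurableSet_le measurable_snd measurable_fst.snd
    have h := ProbabilityTheory.Kernel.measurable_kernel_prodMk_left
      (κ := μ.condKernel.comap (Prod.fst : ℝ × ℝ → ℝ) measurable_fst) ht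
    simp only [Kernel.comap_apply] at h
    exact h
  have hΦ : Measurable (fun p : ℝ × ℝ =>
      ((p.1, (μ.condKernel p.1 (Set.Iic p.2)).toReal) : ℝ × ℝ)) :=
    measurable_fst.prodMk hFmeas.ennreal_toReal
  refine ⟨hΦ, ?_, ?_⟩
  · -- pushforward equals product measure
    refine (Measure.prod_eq fun s t hs ht => ?_).symm
    rw [Measure.map_apply hΦ (hs.prod ht)]
    have hμeq : μ.fst ⊗ₘ μ.condKernel = μ := μ.disintegrate μ.condKernel
    have hpre : MeasurableSet ((fun p : ℝ × ℝ =>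
        ((p.1, (μ.condKernel p.1 (Set.Iic p.2)).toReal) : ℝ × ℝ)) ⁻¹' s ×ˢ t) :=
      hΦ (hs.prod ht)
    have hstep : μ ((fun p : ℝ × ℝ =>
        ((p.1, (μ.condKernel p.1 (Set.Iic p.2)).toReal) : ℝ × ℝ)) ⁻¹' s ×ˢ t)
        = (μ.fst ⊗ₘ μ.condKernel) ((fun p : ℝ × ℝ =>
        ((p.1, (μ.condKernel p.1 (Set.Iic p.2)).toReal) : ℝ × ℝ)) ⁻¹' s ×ˢ t) := by
      rw [hμeq]
    rw [hstep, Measure.compProd_apply hpre]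
    have hsec : ∀ x : ℝ,
        μ.condKernel x (Prod.mk x ⁻¹' ((fun p : ℝ × ℝ =>
          ((p.1, (μ.condKernel p.1 (Set.Iic p.2)).toReal) : ℝ × ℝ)) ⁻¹' s ×ˢ t))
        = s.indicator (fun x => μ.condKernel x (cf (μ.condKernel x) ⁻¹' t)) x := by
      intro x
      by_cases hx : x ∈ s
      · rw [Set.indicator_of_mem hx]
        congr 1
        ext y
        simp [Set.mem_prod, hx, cf]
      · rw [Set.indicator_of_notMem hx]
        convert measure_empty
        · ext y
          simp [Set.mem_prod, hx]
        · infer_instance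
    calc ∫⁻ x, μ.condKernel x (Prod.mk x ⁻¹' ((fun p : ℝ × ℝ =>
          ((p.1, (μ.condKernel p.1 (Set.Iic p.2)).toReal) : ℝ × ℝ)) ⁻¹' s ×ˢ t)) ∂μ.fst
        = ∫⁻ x in s, μ.condKernel x (cf (μ.condKernel x) ⁻¹' t) ∂μ.fst := by
          rw [← lintegral_indicator hs]
          exact lintegral_congr hsec
      _ = ∫⁻ _ in s, (volume.restrict (Set.Icc (0:ℝ) 1)) t ∂μ.fst := by
          refine lintegral_congr_ae (ae_restrict_of_ae ?_)
          filter_upwards [hatomless] with x hx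
          rw [← Measure.map_apply cf_mono.measurable ht, map_cf hx]
      _ = μ.fst s * (volume.restrict (Set.Icc (0:ℝ) 1)) t := by
          rw [setLIntegral_const, mul_comm]
  · -- the inverse map
    set G : ℝ × ℝ → ℝ := fun p => sInf {z | p.2 ≤ cf (μ.condKernel p.1) z} with hGdef
    have hFq : ∀ z : ℝ, Measurable (fun x : ℝ => cf (μ.condKernel x) z) := fun z =>
      (hFmeas.comp (measurable_id.prodMk measurable_const)).ennreal_toReal
    -- the set where the defining set is nonempty and bounded below
    set D : Set (ℝ × ℝ) := {p : ℝ × ℝ | (∃ q : ℚ, p.2 ≤ cf (μ.condKernel p.1) q) ∧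
      (∃ q : ℚ, cf (μ.condKernel p.1) q < p.2)} with hDdef
    have hne_iff : ∀ p : ℝ × ℝ, {z | p.2 ≤ cf (μ.condKernel p.1) z}.Nonempty ↔
        ∃ q : ℚ, p.2 ≤ cf (μ.condKernel p.1) q := by
      intro p
      constructor
      · rintro ⟨z, hz⟩
        obtain ⟨q, hq⟩ := exists_rat_gt z
        exact ⟨q, le_trans hz (cf_mono hq.le)⟩
      · rintro ⟨q, hq⟩
        exact ⟨q, hq⟩
    have hbdd_iff : ∀ p : ℝ × ℝ, BddBelow {z | p.2 ≤ cf (μ.condKernel p.1) z} ↔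
        ∃ q : ℚ, cf (μ.condKernel p.1) q < p.2 := by
      intro p
      constructor
      · rintro ⟨a, ha⟩
        by_contra hq
        push_neg at hq
        obtain ⟨q, hqa⟩ := exists_rat_lt a
        exact absurd (ha (hq q)) (not_le.2 hqa)
      · rintro ⟨q, hq⟩
        refine ⟨q, fun z hz => ?_⟩
        by_contra hzq
        push_neg at hzq
        exact absurd (le_trans hz (cf_mono hzq.le)) (not_le.2 hq)
    have hG0 : ∀ p : ℝ × ℝ, p ∉ D → G p = 0 := by
      intro p hp
      rw [hDdef, mem_setOf_eq, not_and_or] at hp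
      rcases hp with hp | hp
      · rw [hGdef]
        have h5 : {z | p.2 ≤ cf (μ.condKernel p.1) z} = ∅ := by
          rw [← not_nonempty_iff_eq_empty]
          exact fun h => hp ((hne_iff p).1 h)
        simp only [h5]
        exact Real.sInf_empty
      · exact Real.sInf_of_not_bddBelow (fun h => hp ((hbdd_iff p).1 h))
    have hDmeas : MeasurableSet D := by
      have h1 : MeasurableSet {p : ℝ × ℝ | ∃ q : ℚ, p.2 ≤ cf (μ.condKernel p.1) q} := by
        rw [setOf_exists]
        exact MeasurableSet.iUnion fun q =>
          measurableSet_le measurable_snd ((hFq q).comp measurable_fst)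
      have h2 : MeasurableSet {p : ℝ × ℝ | ∃ q : ℚ, cf (μ.condKernel p.1) q < p.2} := by
        rw [setOf_exists]
        exact MeasurableSet.iUnion fun q =>
          measurableSet_lt ((hFq q).comp measurable_fst) measurable_snd
      rw [hDdef, setOf_and]
      exact h1.inter h2
    have hGmeas : Measurable G := by
      refine measurable_of_Iio fun c => ?_
      have key : G ⁻¹' Iio c =
          (D ∩ ⋃ (q : ℚ) (_ : (q : ℝ) < c), {p : ℝ × ℝ | p.2 ≤ cf (μ.condKernel p.1) q}) ∪
          (Dᶜ ∩ {p : ℝ × ℝ | (0:ℝ) < c}) := by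
        ext p
        simp only [mem_preimage, mem_Iio, mem_union, mem_inter_iff, mem_iUnion, mem_compl_iff,
          mem_setOf_eq, exists_prop]
        constructor
        · intro hGp
          by_cases hD : p ∈ D
          · left
            refine ⟨hD, ?_⟩
            obtain ⟨hne, hbdd⟩ := hD
            obtain ⟨z, hz, hzc⟩ := exists_lt_of_csInf_lt ((hne_iff p).2 hne) hGp
            obtain ⟨q, hq1, hq2⟩ := exists_rat_btwn hzc
            exact ⟨q, hq2, le_trans hz (cf_mono hq1.le)⟩
          · right
            exact ⟨hD, by rw [← hG0 p hD]; exact hGp⟩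
        · rintro (⟨hD, q, hqc, hq⟩ | ⟨hD, hc⟩)
          · obtain ⟨hne, hbdd⟩ := hD
            exact lt_of_le_of_lt (csInf_le ((hbdd_iff p).2 hbdd) hq) hqc
          · rw [hG0 p hD]
            exact hc
      rw [key]
      refine MeasurableSet.union (hDmeas.inter ?_) (hDmeas.compl.inter ?_)
      · exact MeasurableSet.iUnion fun q => MeasurableSet.iUnion fun _ =>
          measurableSet_le measurable_snd ((hFq q).comp measurable_fst)
      · rcases lt_or_ge (0:ℝ) c with hc | hc
        · simp only [hc, setOf_true]
          exact MeasurableSet.univ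
        · simp only [not_lt.2 hc, setOf_false]
          exact MeasurableSet.empty
    refine ⟨G, measurable_fst.prodMk hGmeas, ?_, ?_⟩
    · -- left inverse μ-a.e.
      have hset1 : MeasurableSet {p : ℝ × ℝ |
          (((p.1, (μ.condKernel p.1 (Set.Iic p.2)).toReal) : ℝ × ℝ).1,
            G ((p.1, (μ.condKernel p.1 (Set.Iic p.2)).toReal) : ℝ × ℝ)) = p} := by
        have heq : {p : ℝ × ℝ |
            (((p.1, (μ.condKernel p.1 (Set.Iic p.2)).toReal) : ℝ × ℝ).1,
              G ((p.1, (μ.condKernel p.1 (Set.Iic p.2)).toReal) : ℝ × ℝ)) = p}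
            = {p : ℝ × ℝ | G (p.1, (μ.condKernel p.1 (Set.Iic p.2)).toReal) = p.2} := by
          ext p
          simp [Prod.ext_iff]
        rw [heq]
        exact measurableSet_eq_fun
          (hGmeas.comp (measurable_fst.prodMk hFmeas.ennreal_toReal)) measurable_snd
      have hμeq : μ.fst ⊗ₘ μ.condKernel = μ := μ.disintegrate μ.condKernel
      suffices h : ∀ᵐ p ∂(μ.fst ⊗ₘ μ.condKernel),
          (((p.1, (μ.condKernel p.1 (Set.Iic p.2)).toReal) : ℝ × ℝ).1,
            G ((p.1, (μ.condKernel p.1 (Set.Iic p.2)).toReal) : ℝ × ℝ)) = p by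
        rwa [hμeq] at h
      rw [Measure.ae_compProd_iff hset1]
      filter_upwards [hatomless] with x hx
      filter_upwards [ae_left_inv (m := μ.condKernel x) hx] with y hy
      exact Prod.ext_iff.2 ⟨rfl, hy⟩
    · -- right inverse (μ₁ × Leb)-a.e.
      have hset2 : MeasurableSet {p : ℝ × ℝ |
          ((((p.1, G p) : ℝ × ℝ).1,
            (μ.condKernel ((p.1, G p) : ℝ × ℝ).1
              (Set.Iic (((p.1, G p) : ℝ × ℝ).2))).toReal) : ℝ × ℝ) = p} := by
        have heq : {p : ℝ × ℝ |
            ((((p.1, G p) : ℝ × ℝ).1,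
              (μ.condKernel ((p.1, G p) : ℝ × ℝ).1
                (Set.Iic (((p.1, G p) : ℝ × ℝ).2))).toReal) : ℝ × ℝ) = p}
            = {p : ℝ × ℝ | (μ.condKernel p.1 (Set.Iic (G p))).toReal = p.2} := by
          ext p
          simp [Prod.ext_iff]
        rw [heq]
        exact measurableSet_eq_fun
          ((hFmeas.comp (measurable_fst.prodMk hGmeas)).ennreal_toReal) measurable_snd
      refine (Measure.ae_prod_mem_iff_ae_ae_mem hset2).2 ?_
      filter_upwards [hatomless] with x hx
      have hIoo : ∀ᵐ u ∂(volume.restrict (Set.Icc (0:ℝ) 1)), u ∈ Ioo (0:ℝ) 1 := by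
        rw [ae_iff, show {a : ℝ | ¬a ∈ Ioo (0:ℝ) 1} = (Ioo (0:ℝ) 1)ᶜ from rfl,
          Measure.restrict_apply measurableSet_Ioo.compl]
        refine measure_mono_null (t := ({0, 1} : Set ℝ)) (fun u hu => ?_) ?_
        · show u ∈ ({0, 1} : Set ℝ)
          obtain ⟨hu1, hu2, hu3⟩ := hu
          rw [mem_compl_iff, mem_Ioo] at hu1
          push_neg at hu1
          have h01 : u = 0 ∨ u = 1 := by
            rcases le_or_gt u 0 with h0 | h0
            · left; linarith
            · right; linarith [hu1 h0]
          simpa using h01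
        · exact measure_union_null (measure_singleton 0) (measure_singleton 1)
      filter_upwards [hIoo] with u hu
      show ((x, (μ.condKernel x (Set.Iic (G (x, u)))).toReal) : ℝ × ℝ) = (x, u)
      exact Prod.ext_iff.2 ⟨rfl, right_inv hx hu.1 hu.2⟩
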